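/- arXiv:0707.3950 — 2 statements merged into one kernel-verified Lean document; each statement's English description precedes it below -/
import Mathlib

section
/- For every real x > 0 there exists Θ_x with 0 < Θ_x < 1 such that Ψ'(x+1) = 1/x − 1/(2x^2) + 1/(6x^3) − 1/(30x^5) + 1/(42x^7) − Θ_x/(30x^9), where Ψ is the digamma function. -/
open Real Filter Topology Finset

/-- The digamma function `Ψ(x) = Γ'(x)/Γ(x) = (log ∘ Γ)'(x)`. -/
noncomputable def digamma (x : ℝ) : ℝ := deriv (fun y : ℝ => Real.log (Real.Gamma y)) x

namespace TrigammaAux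

lemma log_le {t : ℝ} (ht : 0 ≤ t) : Real.log (1 + t) ≤ t := by
  have := Real.log_le_sub_one_of_pos (show (0:ℝ) < 1 + t by linarith)
  linarith

lemma le_log {t : ℝ} (ht : 0 ≤ t) : t - t ^ 2 ≤ Real.log (1 + t) := by
  have h1 : (0:ℝ) < 1 + t := by linarith
  have h2 := Real.log_le_sub_one_of_pos (show (0:ℝ) < (1+t)⁻¹ by positivity)
  rw [Real.log_inv] at h2
  have h3 : (1 + t) * (1 + t)⁻¹ = 1 := mul_inv_cancel₀ h1.ne'
  nlinarith [mul_nonneg (mul_nonneg ht ht) ht]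

noncomputable def F (k : ℕ) (y : ℝ) : ℝ :=
  y * (Real.log ((k:ℝ) + 2) - Real.log ((k:ℝ) + 1))
    - (Real.log (y + ((k:ℝ) + 1)) - Real.log ((k:ℝ) + 1))

noncomputable def F1 (k : ℕ) (y : ℝ) : ℝ :=
  (Real.log ((k:ℝ) + 2) - Real.log ((k:ℝ) + 1)) - (y + ((k:ℝ) + 1))⁻¹

noncomputable def F2 (k : ℕ) (y : ℝ) : ℝ := ((y + ((k:ℝ) + 1)) ^ 2)⁻¹

lemma log_ratio (k : ℕ) :
    Real.log ((k:ℝ) + 2) - Real.log ((k:ℝ) + 1) = Real.log (1 + ((k:ℝ)+1)⁻¹) := by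
  rw [← Real.log_div (by positivity) (by positivity)]
  congr 1
  field_simp
  ring

lemma log_ratio_le (k : ℕ) :
    Real.log ((k:ℝ) + 2) - Real.log ((k:ℝ) + 1) ≤ ((k:ℝ)+1)⁻¹ := by
  rw [log_ratio]; exact log_le (by positivity)

lemma le_log_ratio (k : ℕ) :
    ((k:ℝ)+1)⁻¹ - (((k:ℝ)+1)⁻¹) ^ 2 ≤ Real.log ((k:ℝ) + 2) - Real.log ((k:ℝ) + 1) := by
  rw [log_ratio]; exact le_log (by positivity)

lemma log_shift {y : ℝ} (hy : 0 < y) (k : ℕ) :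
    Real.log (y + ((k:ℝ)+1)) - Real.log ((k:ℝ)+1) = Real.log (1 + y * ((k:ℝ)+1)⁻¹) := by
  rw [← Real.log_div (by positivity) (by positivity)]
  congr 1
  field_simp
  ring

lemma F_bound (k : ℕ) {y : ℝ} (hy : 0 < y) :
    |F k y| ≤ (y + y ^ 2) * (((k:ℝ)+1) ^ 2)⁻¹ := by
  have hn : (0:ℝ) < (k:ℝ) + 1 := by positivity
  have ha1 := log_ratio_le k
  have ha2 := le_log_ratio k
  have hb1 : Real.log (1 + y * ((k:ℝ)+1)⁻¹) ≤ y * ((k:ℝ)+1)⁻¹ := log_le (by positivity)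
  have hb2 : y * ((k:ℝ)+1)⁻¹ - (y * ((k:ℝ)+1)⁻¹) ^ 2 ≤ Real.log (1 + y * ((k:ℝ)+1)⁻¹) :=
    le_log (by positivity)
  have hinv : (((k:ℝ)+1)⁻¹) ^ 2 = (((k:ℝ)+1) ^ 2)⁻¹ := by rw [inv_pow]
  have hsq : (y * ((k:ℝ)+1)⁻¹) ^ 2 = y ^ 2 * (((k:ℝ)+1) ^ 2)⁻¹ := by
    rw [mul_pow, inv_pow]
  rw [F, log_shift hy k, abs_le]
  constructor
  · nlinarith [mul_le_mul_of_nonneg_left ha2 hy.le, sq_nonneg (((k:ℝ)+1)⁻¹),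
      mul_pos hy (inv_pos.mpr (pow_pos hn 2))]
  · nlinarith [mul_le_mul_of_nonneg_left ha1 hy.le, sq_nonneg (y * ((k:ℝ)+1)⁻¹),
      mul_pos hy (inv_pos.mpr (pow_pos hn 2))]

lemma F1_bound (k : ℕ) {y B : ℝ} (hy : 0 < y) (hyB : y < B) :
    ‖F1 k y‖ ≤ (1 + B) * (((k:ℝ)+1) ^ 2)⁻¹ := by
  have hn : (0:ℝ) < (k:ℝ) + 1 := by positivity
  have ha1 := log_ratio_le k
  have ha2 := le_log_ratio k
  have hinv : (((k:ℝ)+1)⁻¹) ^ 2 = (((k:ℝ)+1) ^ 2)⁻¹ := by rw [inv_pow]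
  have he : ((k:ℝ)+1)⁻¹ - (y + ((k:ℝ)+1))⁻¹ = y / (((k:ℝ)+1) * (y + ((k:ℝ)+1))) := by
    field_simp
    ring
  have hle : y / (((k:ℝ)+1) * (y + ((k:ℝ)+1))) ≤ y * (((k:ℝ)+1) ^ 2)⁻¹ := by
    rw [div_le_iff₀ (by positivity)]
    have h2 : ((k:ℝ)+1) ^ 2 ≤ ((k:ℝ)+1) * (y + ((k:ℝ)+1)) := by nlinarith
    have h3 : (0:ℝ) < (((k:ℝ)+1) ^ 2) := by positivity
    calc y = y * ((((k:ℝ)+1) ^ 2)⁻¹ * (((k:ℝ)+1) ^ 2)) := by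
            rw [inv_mul_cancel₀ h3.ne', mul_one]
      _ ≤ y * (((k:ℝ)+1) ^ 2)⁻¹ * (((k:ℝ)+1) * (y + ((k:ℝ)+1))) := by
            rw [mul_assoc]
            exact mul_le_mul_of_nonneg_left (mul_le_mul_of_nonneg_left h2 (by positivity)) hy.le
  have hge : 0 ≤ ((k:ℝ)+1)⁻¹ - (y + ((k:ℝ)+1))⁻¹ := by
    rw [he]; positivity
  rw [F1, Real.norm_eq_abs, abs_le]
  have hB : 0 < B := hy.trans hyB
  constructor
  · nlinarith [inv_pos.mpr (pow_pos hn 2)]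
  · have := he ▸ hle
    nlinarith [inv_pos.mpr (pow_pos hn 2)]

lemma summable_inv_sq : Summable (fun k : ℕ => (((k:ℝ)+1) ^ 2)⁻¹) := by
  have h := Real.summable_one_div_nat_pow.mpr (le_refl 2)
  have h2 := (summable_nat_add_iff 1).mpr h
  refine h2.congr fun n => ?_
  push_cast
  rw [one_div]

lemma summable_F {y : ℝ} (hy : 0 < y) : Summable (fun k => F k y) := by
  refine Summable.of_norm_bounded (summable_inv_sq.mul_left (y + y ^ 2)) fun k => ?_
  simpa [Real.norm_eq_abs] using F_bound k hy

lemma summable_F1 {y : ℝ} (hy : 0 < y) : Summable (fun k => F1 k y) := by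
  refine Summable.of_norm_bounded (summable_inv_sq.mul_left (1 + (y+1))) fun k => ?_
  exact F1_bound k hy (by linarith)

lemma hasDerivAt_F (k : ℕ) {y : ℝ} (hy : 0 < y) : HasDerivAt (F k) (F1 k y) y := by
  have h1 : HasDerivAt (fun z : ℝ => z * (Real.log ((k:ℝ) + 2) - Real.log ((k:ℝ) + 1)))
      (Real.log ((k:ℝ) + 2) - Real.log ((k:ℝ) + 1)) y := by
    simpa using (hasDerivAt_id y).mul_const (Real.log ((k:ℝ) + 2) - Real.log ((k:ℝ) + 1))
  have hne : y + ((k:ℝ)+1) ≠ 0 := by positivity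
  have h2 : HasDerivAt (fun z : ℝ => Real.log (z + ((k:ℝ)+1)) - Real.log ((k:ℝ)+1))
      ((y + ((k:ℝ)+1))⁻¹) y := by
    have h' := (((hasDerivAt_id y).add_const ((k:ℝ)+1)).log hne).sub_const (Real.log ((k:ℝ)+1))
    simpa [one_div] using h'
  exact h1.sub h2

lemma hasDerivAt_F1 (k : ℕ) {y : ℝ} (hy : 0 < y) : HasDerivAt (F1 k) (F2 k y) y := by
  have hne : y + ((k:ℝ)+1) ≠ 0 := by positivity
  have h2 : HasDerivAt (fun z : ℝ => (z + ((k:ℝ)+1))⁻¹) (-1 / (y + ((k:ℝ)+1)) ^ 2) y := by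
    simpa using ((hasDerivAt_id y).add_const ((k:ℝ)+1)).fun_inv hne
  have h := (hasDerivAt_const y (Real.log ((k:ℝ) + 2) - Real.log ((k:ℝ) + 1))).fun_sub h2
  have e : F2 k y = 0 - -1 / (y + ((k:ℝ)+1)) ^ 2 := by simp only [F2]; ring
  have hf : F1 k = fun z : ℝ => (Real.log ((k:ℝ) + 2) - Real.log ((k:ℝ) + 1))
      - (z + ((k:ℝ)+1))⁻¹ := rfl
  rw [hf, e]
  simpa using h

lemma log_factorial (N : ℕ) : Real.log (Nat.factorial N) = ∑ k ∈ range N, Real.log ((k:ℝ)+1) := by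
  induction N with
  | zero => simp
  | succ n ih =>
    rw [Finset.sum_range_succ, ← ih, Nat.factorial_succ, Nat.cast_mul,
      Real.log_mul (by positivity) (by exact_mod_cast (Nat.factorial_pos n).ne')]
    push_cast
    ring

lemma sum_F {y : ℝ} (hy : 0 < y) (N : ℕ) :
    ∑ k ∈ range N, F k y =
      Real.BohrMollerup.logGammaSeq y N + Real.log y
        + y * (Real.log ((N:ℝ)+1) - Real.log (N:ℝ)) := by
  have t1 : ∑ k ∈ range N, (Real.log ((k:ℝ)+2) - Real.log ((k:ℝ)+1)) = Real.log ((N:ℝ)+1) := by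
    have h := Finset.sum_range_sub (f := fun i : ℕ => Real.log ((i:ℝ)+1)) N
    have h2 : ∀ k : ℕ, Real.log (((k+1:ℕ):ℝ)+1) - Real.log ((k:ℝ)+1)
        = Real.log ((k:ℝ)+2) - Real.log ((k:ℝ)+1) := by intro k; push_cast; ring_nf
    rw [Finset.sum_congr rfl (fun k _ => h2 k)] at h
    simpa using h
  have t3 : ∑ m ∈ range (N+1), Real.log (y + (m:ℝ))
      = Real.log y + ∑ k ∈ range N, Real.log (y + ((k:ℝ)+1)) := by
    rw [Finset.sum_range_succ' (fun m : ℕ => Real.log (y + (m:ℝ)))]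
    push_cast
    simp [add_comm]
  simp only [F, Real.BohrMollerup.logGammaSeq]
  rw [Finset.sum_sub_distrib, ← Finset.mul_sum, t1, Finset.sum_sub_distrib,
    ← log_factorial, t3]
  ring

lemma tendsto_log_succ_sub :
    Tendsto (fun N : ℕ => Real.log ((N:ℝ)+1) - Real.log (N:ℝ)) atTop (𝓝 0) := by
  have h0 : Tendsto (fun N : ℕ => (N:ℝ)⁻¹) atTop (𝓝 0) :=
    tendsto_inv_atTop_zero.comp tendsto_natCast_atTop_atTop
  have h1 : Tendsto (fun N : ℕ => 1 + (N:ℝ)⁻¹) atTop (𝓝 (1 + 0)) :=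
    (tendsto_const_nhds (x := (1:ℝ))).add h0
  rw [add_zero] at h1
  have h2 : Tendsto (fun N : ℕ => Real.log (1 + (N:ℝ)⁻¹)) atTop (𝓝 0) := by
    have h := (Real.continuousAt_log one_ne_zero).tendsto.comp h1
    simpa [Function.comp_def] using h
  refine h2.congr' ?_
  filter_upwards [eventually_gt_atTop 0] with N hN
  have hN' : (0:ℝ) < (N:ℝ) := by exact_mod_cast hN
  rw [show (1:ℝ) + (N:ℝ)⁻¹ = ((N:ℝ)+1)/(N:ℝ) by field_simp,
    Real.log_div (by positivity) hN'.ne']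

lemma hasSum_F {y : ℝ} (hy : 0 < y) :
    HasSum (fun k => F k y) (Real.log (Real.Gamma y) + Real.log y) := by
  rw [(summable_F hy).hasSum_iff_tendsto_nat]
  have h := Real.BohrMollerup.tendsto_log_gamma hy
  have h2 : Tendsto (fun N : ℕ => y * (Real.log ((N:ℝ)+1) - Real.log (N:ℝ))) atTop (𝓝 0) := by
    simpa using Tendsto.const_mul y tendsto_log_succ_sub
  have h3 := (h.add (tendsto_const_nhds (x := Real.log y))).add h2
  have h4 : Real.log (Real.Gamma y) + Real.log y + 0 = Real.log (Real.Gamma y) + Real.log y := by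
    ring
  rw [h4] at h3
  exact h3.congr fun N => (sum_F hy N).symm

lemma logGamma_eq {y : ℝ} (hy : 0 < y) :
    Real.log (Real.Gamma y) = -Real.log y + ∑' k, F k y := by
  rw [(hasSum_F hy).tsum_eq]; ring

lemma digamma_eq {y : ℝ} (hy : 0 < y) : digamma y = -y⁻¹ + ∑' k, F1 k y := by
  have hB : HasDerivAt (fun z => ∑' k, F k z) (∑' k, F1 k y) y := by
    refine hasDerivAt_tsum_of_isPreconnected
      (g := F) (g' := F1) (t := Set.Ioo 0 (y+1)) (y₀ := y)
      (u := fun k : ℕ => (1 + (y+1)) * (((k:ℝ)+1) ^ 2)⁻¹)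
      (summable_inv_sq.mul_left _) isOpen_Ioo
      ((convex_Ioo (0:ℝ) (y+1)).isPreconnected)
      (fun k z hz => hasDerivAt_F k hz.1)
      (fun k z hz => F1_bound k hz.1 hz.2)
      ⟨hy, lt_add_one y⟩ (summable_F hy) ⟨hy, lt_add_one y⟩
  have hA : HasDerivAt (fun z : ℝ => -Real.log z) (-y⁻¹) y := by
    simpa [one_div] using (Real.hasDerivAt_log hy.ne').fun_neg
  have hd := hA.add hB
  have he : (fun z : ℝ => Real.log (Real.Gamma z)) =ᶠ[𝓝 y]
      (fun z => -Real.log z + ∑' k, F k z) := by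
    filter_upwards [Ioi_mem_nhds hy] with z hz using logGamma_eq hz
  have hd' := hd.congr_of_eventuallyEq he
  exact hd'.deriv

lemma F2_bound (k : ℕ) {z : ℝ} (hz : 0 < z) : ‖F2 k z‖ ≤ (((k:ℝ)+1) ^ 2)⁻¹ := by
  have hn : (0:ℝ) < (k:ℝ) + 1 := by positivity
  rw [F2, Real.norm_eq_abs, abs_of_nonneg (by positivity)]
  exact inv_anti₀ (by positivity) (by nlinarith)

lemma hasDerivAt_digamma {y : ℝ} (hy : 0 < y) :
    HasDerivAt digamma ((y ^ 2)⁻¹ + ∑' k, F2 k y) y := by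
  have hB : HasDerivAt (fun z => ∑' k, F1 k z) (∑' k, F2 k y) y := by
    refine hasDerivAt_tsum_of_isPreconnected
      (g := F1) (g' := F2) (t := Set.Ioi 0) (y₀ := y)
      (u := fun k : ℕ => (((k:ℝ)+1) ^ 2)⁻¹)
      summable_inv_sq isOpen_Ioi ((convex_Ioi (0:ℝ)).isPreconnected)
      (fun k z hz => hasDerivAt_F1 k hz)
      (fun k z hz => F2_bound k hz)
      hy (summable_F1 hy) hy
  have hA : HasDerivAt (fun z : ℝ => -z⁻¹) ((y ^ 2)⁻¹) y := by
    simpa [one_div] using (hasDerivAt_inv hy.ne').fun_neg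
  have hd := hA.add hB
  refine hd.congr_of_eventuallyEq ?_
  filter_upwards [Ioi_mem_nhds hy] with z hz using digamma_eq hz

lemma summable_S {x : ℝ} (hx : 0 < x) :
    Summable (fun k : ℕ => ((x + 1 + (k:ℝ)) ^ 2)⁻¹) := by
  refine Summable.of_norm_bounded summable_inv_sq fun k => ?_
  have hn : (0:ℝ) < (k:ℝ) + 1 := by positivity
  rw [Real.norm_eq_abs, abs_of_nonneg (by positivity)]
  exact inv_anti₀ (by positivity) (by nlinarith)

lemma deriv_digamma_eq {x : ℝ} (hx : 0 < x) :
    deriv digamma (x + 1) = ∑' k : ℕ, ((x + 1 + (k:ℝ)) ^ 2)⁻¹ := by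
  rw [(hasDerivAt_digamma (show (0:ℝ) < x + 1 by linarith)).deriv,
    Summable.tsum_eq_zero_add (summable_S hx)]
  congr 1
  · norm_num
  · refine tsum_congr fun k => ?_
    rw [F2]
    push_cast
    ring_nf

noncomputable def G (c x : ℝ) : ℝ :=
  1/x - 1/(2*x^2) + 1/(6*x^3) - 1/(30*x^5) + 1/(42*x^7) - c/(30*x^9)

lemma hasSum_tele {x : ℝ} (hx : 0 < x) (m : ℕ) (hm : m ≠ 0) :
    HasSum (fun k : ℕ => ((x+(k:ℝ))^m)⁻¹ - ((x+(k:ℝ)+1)^m)⁻¹) ((x^m)⁻¹) := by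
  rw [hasSum_iff_tendsto_nat_of_nonneg]
  · have hsum : ∀ N : ℕ, ∑ k ∈ range N, (((x+(k:ℝ))^m)⁻¹ - ((x+(k:ℝ)+1)^m)⁻¹)
        = (x^m)⁻¹ - ((x+(N:ℝ))^m)⁻¹ := by
      intro N
      have h := Finset.sum_range_sub' (f := fun k : ℕ => ((x+(k:ℝ))^m)⁻¹) N
      have h2 : ∀ k : ℕ, ((x+(k:ℝ))^m)⁻¹ - ((x+((k+1:ℕ):ℝ))^m)⁻¹
          = ((x+(k:ℝ))^m)⁻¹ - ((x+(k:ℝ)+1)^m)⁻¹ := by intro k; push_cast; ring_nf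
      rw [Finset.sum_congr rfl (fun k _ => h2 k)] at h
      simpa using h
    have ht : Tendsto (fun N : ℕ => (x^m)⁻¹ - ((x+(N:ℝ))^m)⁻¹) atTop (𝓝 ((x^m)⁻¹ - 0)) := by
      refine tendsto_const_nhds.sub ?_
      exact ((tendsto_pow_atTop hm).comp
        (tendsto_atTop_add_const_left atTop x tendsto_natCast_atTop_atTop)).inv_tendsto_atTop
    simpa using ht.congr fun N => (hsum N).symm
  · intro k
    have h1 : (0:ℝ) < x + (k:ℝ) := by positivity
    have h2 : (x+(k:ℝ))^m ≤ (x+(k:ℝ)+1)^m := pow_le_pow_left₀ h1.le (by linarith) m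
    have h3 := inv_anti₀ (pow_pos h1 m) h2
    linarith

lemma G_eq (c t : ℝ) : G c t
    = 1*(t^1)⁻¹ - (1/2)*(t^2)⁻¹ + (1/6)*(t^3)⁻¹ - (1/30)*(t^5)⁻¹ + (1/42)*(t^7)⁻¹
      - (c/30)*(t^9)⁻¹ := by
  simp only [G]; ring

lemma hasSum_G (c : ℝ) {x : ℝ} (hx : 0 < x) :
    HasSum (fun k : ℕ => G c (x+(k:ℝ)) - G c (x+(k:ℝ)+1)) (G c x) := by
  have h := fun (m : ℕ) (hm : m ≠ 0) => hasSum_tele hx m hm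
  have H1 := (h 1 one_ne_zero).mul_left 1
  have H2 := H1.sub ((h 2 (by norm_num)).mul_left (1/2))
  have H3 := H2.add ((h 3 (by norm_num)).mul_left (1/6))
  have H4 := H3.sub ((h 5 (by norm_num)).mul_left (1/30))
  have H5 := H4.add ((h 7 (by norm_num)).mul_left (1/42))
  have H := H5.sub ((h 9 (by norm_num)).mul_left (c/30))
  have hfun : (fun k : ℕ => G c (x+(k:ℝ)) - G c (x+(k:ℝ)+1))
      = fun k : ℕ =>
        1 * (((x+(k:ℝ))^1)⁻¹ - ((x+(k:ℝ)+1)^1)⁻¹)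
          - 1/2 * (((x+(k:ℝ))^2)⁻¹ - ((x+(k:ℝ)+1)^2)⁻¹)
          + 1/6 * (((x+(k:ℝ))^3)⁻¹ - ((x+(k:ℝ)+1)^3)⁻¹)
          - 1/30 * (((x+(k:ℝ))^5)⁻¹ - ((x+(k:ℝ)+1)^5)⁻¹)
          + 1/42 * (((x+(k:ℝ))^7)⁻¹ - ((x+(k:ℝ)+1)^7)⁻¹)
          - c/30 * (((x+(k:ℝ))^9)⁻¹ - ((x+(k:ℝ)+1)^9)⁻¹) := by
    funext k
    rw [G_eq, G_eq]
    ring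
  have hval : G c x
      = 1 * (x^1)⁻¹ - 1/2 * (x^2)⁻¹ + 1/6 * (x^3)⁻¹ - 1/30 * (x^5)⁻¹ + 1/42 * (x^7)⁻¹
        - c/30 * (x^9)⁻¹ := by
    rw [G_eq]
  rw [hfun, hval]
  exact H

lemma key0 {t : ℝ} (ht : 0 < t) : ((t+1)^2)⁻¹ < G 0 t - G 0 (t+1) := by
  have ht0 : t ≠ 0 := ht.ne'
  have ht1 : t + 1 ≠ 0 := by positivity
  have h1 : (0:ℝ) < 210 * t^9 * (t+1)^9 := by positivity
  have hid : G 0 t - G 0 (t+1) - ((t+1)^2)⁻¹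
      = (5*t^2 + 45*t^3 + 173*t^4 + 357*t^5 + 413*t^6 + 252*t^7 + 63*t^8)
        / (210 * t^9 * (t+1)^9) := by
    simp only [G]
    field_simp
    ring
  have h2 : 0 < (5*t^2 + 45*t^3 + 173*t^4 + 357*t^5 + 413*t^6 + 252*t^7 + 63*t^8)
      / (210 * t^9 * (t+1)^9) := div_pos (by positivity) h1
  linarith [hid ▸ h2]

lemma key1 {t : ℝ} (ht : 0 < t) : G 1 t - G 1 (t+1) < ((t+1)^2)⁻¹ := by
  have ht0 : t ≠ 0 := ht.ne'
  have ht1 : t + 1 ≠ 0 := by positivity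
  have h1 : (0:ℝ) < 210 * t^9 * (t+1)^9 := by positivity
  have hid : ((t+1)^2)⁻¹ - (G 1 t - G 1 (t+1))
      = (7 + 63*t + 247*t^2 + 543*t^3 + 709*t^4 + 525*t^5 + 175*t^6)
        / (210 * t^9 * (t+1)^9) := by
    simp only [G]
    field_simp
    ring
  have h2 : 0 < (7 + 63*t + 247*t^2 + 543*t^3 + 709*t^4 + 525*t^5 + 175*t^6)
      / (210 * t^9 * (t+1)^9) := div_pos (by positivity) h1
  linarith [hid ▸ h2]

end TrigammaAux

open TrigammaAux in
theorem trigamma_expansion (x : ℝ) (hx : 0 < x) :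
    ∃ Θ : ℝ, 0 < Θ ∧ Θ < 1 ∧
      deriv digamma (x + 1) =
        1 / x - 1 / (2 * x ^ 2) + 1 / (6 * x ^ 3) - 1 / (30 * x ^ 5) +
          1 / (42 * x ^ 7) - Θ / (30 * x ^ 9) := by
  have hderiv := deriv_digamma_eq hx
  set T : ℝ := ∑' k : ℕ, ((x + 1 + (k:ℝ)) ^ 2)⁻¹ with hTdef
  have hsummT : Summable (fun k : ℕ => ((x + 1 + (k:ℝ)) ^ 2)⁻¹) := summable_S hx
  have hG0 := hasSum_G 0 hx
  have hG1 := hasSum_G 1 hx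
  have hcast : ∀ k : ℕ, ((x + 1 + (k:ℝ)) ^ 2)⁻¹ = (((x + (k:ℝ)) + 1) ^ 2)⁻¹ := by
    intro k; ring_nf
  have hle0 : ∀ k : ℕ, ((x + 1 + (k:ℝ)) ^ 2)⁻¹ ≤ G 0 (x+(k:ℝ)) - G 0 (x+(k:ℝ)+1) := by
    intro k
    have h := key0 (t := x+(k:ℝ)) (by positivity)
    rw [hcast k]; linarith
  have hle1 : ∀ k : ℕ, G 1 (x+(k:ℝ)) - G 1 (x+(k:ℝ)+1) ≤ ((x + 1 + (k:ℝ)) ^ 2)⁻¹ := by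
    intro k
    have h := key1 (t := x+(k:ℝ)) (by positivity)
    rw [hcast k]; linarith
  have hT_lt : T < G 0 x := by
    rw [hTdef, ← hG0.tsum_eq]
    refine Summable.tsum_lt_tsum (i := 0) hle0 ?_ hsummT hG0.summable
    have h := key0 (t := x+(0:ℕ)) (by positivity)
    rw [hcast 0]; linarith
  have hlt_T : G 1 x < T := by
    rw [hTdef, ← hG1.tsum_eq]
    refine Summable.tsum_lt_tsum (i := 0) hle1 ?_ hG1.summable hsummT
    have h := key1 (t := x+(0:ℕ)) (by positivity)
    rw [hcast 0]; linarith
  have h9 : (0:ℝ) < 30 * x ^ 9 := by positivity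
  have hG01 : G 0 x = G 1 x + 1/(30*x^9) := by
    simp only [G]; ring
  refine ⟨(G 0 x - T) * (30 * x ^ 9), mul_pos (by linarith) h9, ?_, ?_⟩
  · have hlt : G 0 x - T < 1/(30*x^9) := by linarith
    have h2 := mul_lt_mul_of_pos_right hlt h9
    rw [one_div, inv_mul_cancel₀ h9.ne'] at h2
    exact h2
  · rw [hderiv, mul_div_cancel_right₀ _ h9.ne']
    simp only [G]
    ring
end

section
/- For every real x > 0: 1/(3x^2) − 1/(3x^3) + 4/(15x^4) − 1/(5x^5) + 10/(63x^6) − 1/(7x^7) < 2Ψ(x+1) − ln(x(x+1)) < 1/(3x^2) − 1/(3x^3) + 4/(15x^4) − 1/(5x^5) + 10/(63x^6), where Ψ is the digamma function. -/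
open Real Set Filter

noncomputable def Pf (t : ℝ) : ℝ :=
  1 / (3 * t ^ 2) - 1 / (3 * t ^ 3) + 4 / (15 * t ^ 4) - 1 / (5 * t ^ 5) + 10 / (63 * t ^ 6)

noncomputable def Qf (t : ℝ) : ℝ := Pf t - 1 / (7 * t ^ 7)

lemma hasDerivAt_logGamma {x : ℝ} (hx : 0 < x) :
    HasDerivAt (fun y : ℝ => Real.log (Real.Gamma y)) (digamma x) x := by
  have hne : ∀ m : ℕ, x ≠ -m := by
    intro m h
    have : (0:ℝ) ≤ (m:ℝ) := Nat.cast_nonneg m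
    nlinarith [hx]
  have hd : DifferentiableAt ℝ (fun y : ℝ => Real.log (Real.Gamma y)) x :=
    (Real.differentiableAt_Gamma hne).log (Real.Gamma_pos_of_pos hx).ne'
  exact hd.hasDerivAt

lemma digamma_add_one {x : ℝ} (hx : 0 < x) : digamma (x + 1) = digamma x + 1 / x := by
  have h1 : HasDerivAt (fun y : ℝ => Real.log (Real.Gamma y)) (digamma (x + 1)) (x + 1) :=
    hasDerivAt_logGamma (by linarith)
  have h2 : HasDerivAt (fun y : ℝ => Real.log (Real.Gamma (y + 1))) (digamma (x + 1)) x := by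
    have := h1.comp x ((hasDerivAt_id x).add_const 1)
    simpa [Function.comp_def] using this
  have h3 : HasDerivAt (fun y : ℝ => Real.log y + Real.log (Real.Gamma y))
      (1 / x + digamma x) x := by
    have := (Real.hasDerivAt_log hx.ne').add (hasDerivAt_logGamma hx)
    simpa [one_div, Pi.add_def] using this
  have heq : (fun y : ℝ => Real.log (Real.Gamma (y + 1))) =ᶠ[nhds x]
      fun y : ℝ => Real.log y + Real.log (Real.Gamma y) := by
    filter_upwards [eventually_gt_nhds hx] with y hy
    rw [Real.Gamma_add_one hy.ne', Real.log_mul hy.ne' (Real.Gamma_pos_of_pos hy).ne']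
  have := (h2.congr_of_eventuallyEq heq.symm).unique h3
  linarith

lemma digamma_bracket {y : ℝ} (hy : 0 < y) :
    Real.log y ≤ digamma (y + 1) ∧ digamma y ≤ Real.log y := by
  have hmem : y ∈ Ioi (0:ℝ) := hy
  have hmem1 : y + 1 ∈ Ioi (0:ℝ) := by simp; linarith
  have hlt : y < y + 1 := by linarith
  have hslope : slope (Real.log ∘ Real.Gamma) y (y + 1) = Real.log y := by
    have : Real.Gamma (y + 1) = y * Real.Gamma y := Real.Gamma_add_one hy.ne'
    simp only [slope_def_field, Function.comp_apply, this,
      Real.log_mul hy.ne' (Real.Gamma_pos_of_pos hy).ne']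
    ring
  constructor
  · have := Real.convexOn_log_Gamma.slope_le_of_hasDerivAt hmem hmem1 hlt
      (f' := digamma (y + 1)) (by simpa [Function.comp_def] using hasDerivAt_logGamma (show (0:ℝ) < y + 1 by linarith))
    rwa [hslope] at this
  · have := Real.convexOn_log_Gamma.le_slope_of_hasDerivAt hmem hmem1 hlt
      (f' := digamma y) (by simpa [Function.comp_def] using hasDerivAt_logGamma hy)
    rwa [hslope] at this

lemma keyP {y : ℝ} (hy : 0 < y) :
    2 / (3 * (y+1)^3) + 2 / (5 * (y+1)^5) + 2 / (7 * (y * (y+1)^5 * (y+2))) ≤ Pf y - Pf (y+1) := by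
  rw [← sub_nonneg]
  have hy1 : (0:ℝ) < y + 1 := by linarith
  have hy2 : (0:ℝ) < y + 2 := by linarith
  have key : Pf y - Pf (y+1) - (2 / (3 * (y+1)^3) + 2 / (5 * (y+1)^5) +
      2 / (7 * (y * (y+1)^5 * (y+2)))) =
      (100*y + 524*y^2 + 1149*y^3 + 1364*y^4 + 904*y^5 + 315*y^6) /
        (315 * y^7 * (y+1)^6 * (y+2)) := by
    unfold Pf
    field_simp
    ring
  rw [key]
  positivity

lemma keyQ {y : ℝ} (hy : 0 < y) :
    Qf y - Qf (y+1) ≤ 2 / (3 * (y+1)^3) + 2 / (5 * (y+1)^5) + 2 / (7 * (y+1)^7) := by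
  rw [← sub_nonneg]
  have hy1 : (0:ℝ) < y + 1 := by linarith
  have key : 2 / (3 * (y+1)^3) + 2 / (5 * (y+1)^5) + 2 / (7 * (y+1)^7) - (Qf y - Qf (y+1)) =
      (45 + 265*y + 658*y^2 + 882*y^3 + 665*y^4 + 266*y^5) / (315 * y^7 * (y+1)^7) := by
    unfold Qf Pf
    field_simp
    ring
  rw [key]
  positivity

lemma artanh_lb {u : ℝ} (hu0 : 0 < u) (hu1 : u < 1) :
    2*u + 2*u^3/3 + 2*u^5/5 + 2*u^7/7 < Real.log (1+u) - Real.log (1-u) := by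
  set F : ℝ → ℝ := fun u => Real.log (1+u) - Real.log (1-u) - (2*u + 2*u^3/3 + 2*u^5/5 + 2*u^7/7)
    with hF
  have hder : ∀ v ∈ Ioo (0:ℝ) 1, HasDerivAt F (2*v^8 / ((1-v)*(1+v))) v := by
    rintro v ⟨hv0, hv1⟩
    have h1 : HasDerivAt (fun w : ℝ => Real.log (1+w)) (1/(1+v)) v := by
      have := ((hasDerivAt_id v).const_add 1).log (by linarith : (1:ℝ)+v ≠ 0)
      simpa using this
    have h2 : HasDerivAt (fun w : ℝ => Real.log (1-w)) (-1/(1-v)) v := by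
      have := ((hasDerivAt_id v).const_sub 1).log (by intro h; linarith : (1:ℝ)-v ≠ 0)
      simpa using this
    have h3 : HasDerivAt (fun w : ℝ => 2*w + 2*w^3/3 + 2*w^5/5 + 2*w^7/7)
        (2 + 2*v^2 + 2*v^4 + 2*v^6) v := by
      have := (((hasDerivAt_id v).const_mul 2).add
        (((hasDerivAt_pow 3 v).const_mul 2).div_const 3)).add
        (((hasDerivAt_pow 5 v).const_mul 2).div_const 5) |>.add
        (((hasDerivAt_pow 7 v).const_mul 2).div_const 7)
      convert this using 1 <;> try rfl
      ring
    have := (h1.sub h2).sub h3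
    convert this using 1 <;> try rfl
    have hne1 : (1:ℝ) - v ≠ 0 := by intro h; linarith
    have hne2 : (1:ℝ) + v ≠ 0 := by linarith
    field_simp
    ring
  have hmono : StrictMonoOn F (Ico (0:ℝ) 1) := by
    apply strictMonoOn_of_deriv_pos (convex_Ico 0 1)
    · apply ContinuousOn.sub
      · apply ContinuousOn.sub
        · exact (continuous_const.add continuous_id).continuousOn.log
            (fun v hv => by rcases hv with ⟨h0, _⟩; intro h; simp only [Pi.add_apply, Pi.sub_apply, id_eq] at h; linarith)
        · exact (continuous_const.sub continuous_id).continuousOn.log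
            (fun v hv => by rcases hv with ⟨_, h1⟩; intro h; simp only [Pi.add_apply, Pi.sub_apply, id_eq] at h; linarith)
      · fun_prop
    · intro v hv
      rw [interior_Ico] at hv
      rw [(hder v hv).deriv]
      rcases hv with ⟨hv0, hv1⟩
      have : (0:ℝ) < (1-v)*(1+v) := by nlinarith
      positivity
  have h0 : F 0 = 0 := by simp [hF]
  have := hmono (by simp : (0:ℝ) ∈ Ico (0:ℝ) 1) (by exact ⟨hu0.le, hu1⟩) hu0
  rw [h0] at this
  simp only [hF] at this
  linarith

lemma artanh_ub {u : ℝ} (hu0 : 0 < u) (hu1 : u < 1) :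
    Real.log (1+u) - Real.log (1-u) < 2*u + 2*u^3/3 + 2*u^5/5 + 2*u^7/(7*(1-u^2)) := by
  set G : ℝ → ℝ := fun u => 2*u + 2*u^3/3 + 2*u^5/5 + 2*u^7/(7*(1-u^2)) -
    (Real.log (1+u) - Real.log (1-u)) with hG
  have hder : ∀ v ∈ Ioo (0:ℝ) 1, HasDerivAt G (4*v^8 / (7*((1-v^2))^2)) v := by
    rintro v ⟨hv0, hv1⟩
    have hne : 7*(1-v^2) ≠ 0 := by nlinarith
    have h1 : HasDerivAt (fun w : ℝ => Real.log (1+w)) (1/(1+v)) v := by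
      have := ((hasDerivAt_id v).const_add 1).log (by linarith : (1:ℝ)+v ≠ 0)
      simpa using this
    have h2 : HasDerivAt (fun w : ℝ => Real.log (1-w)) (-1/(1-v)) v := by
      have := ((hasDerivAt_id v).const_sub 1).log (by intro h; nlinarith : (1:ℝ)-v ≠ 0)
      simpa using this
    have h4 : HasDerivAt (fun w : ℝ => 7*(1-w^2)) (7*(-(2*v))) v := by
      have := (((hasDerivAt_pow 2 v).const_sub 1)).const_mul (7:ℝ)
      convert this using 1 <;> try rfl
      ring
    have h3 : HasDerivAt (fun w : ℝ => 2*w^7/(7*(1-w^2)))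
        ((2*(7*v^6)*(7*(1-v^2)) - 2*v^7*(7*(-(2*v))))/(7*(1-v^2))^2) v := by
      exact ((hasDerivAt_pow 7 v).const_mul 2).div h4 hne
    have hpoly : HasDerivAt (fun w : ℝ => 2*w + 2*w^3/3 + 2*w^5/5)
        (2 + 2*v^2 + 2*v^4) v := by
      have := (((hasDerivAt_id v).const_mul 2).add
        (((hasDerivAt_pow 3 v).const_mul 2).div_const 3)).add
        (((hasDerivAt_pow 5 v).const_mul 2).div_const 5)
      convert this using 1 <;> try rfl
      ring
    have := ((hpoly.add h3)).sub (h1.sub h2)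
    convert this using 1 <;> try rfl
    have hne1 : (1:ℝ) - v ≠ 0 := by intro h; nlinarith
    have hne2 : (1:ℝ) + v ≠ 0 := by linarith
    have hne3 : (1:ℝ) - v^2 ≠ 0 := by intro h; nlinarith
    field_simp
    ring
  have hmono : StrictMonoOn G (Ico (0:ℝ) 1) := by
    apply strictMonoOn_of_deriv_pos (convex_Ico 0 1)
    · apply ContinuousOn.sub
      · apply ContinuousOn.add
        · fun_prop
        · apply ContinuousOn.div
          · fun_prop
          · fun_prop
          · rintro v ⟨h0, h1⟩
            have : v^2 < 1 := by nlinarith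
            intro h; nlinarith
      · apply ContinuousOn.sub
        · exact (continuous_const.add continuous_id).continuousOn.log
            (fun v hv => by rcases hv with ⟨h0, _⟩; intro h; simp only [Pi.add_apply, Pi.sub_apply, id_eq] at h; linarith)
        · exact (continuous_const.sub continuous_id).continuousOn.log
            (fun v hv => by rcases hv with ⟨_, h1⟩; intro h; simp only [Pi.add_apply, Pi.sub_apply, id_eq] at h; linarith)
    · intro v hv
      rw [interior_Ico] at hv
      rw [(hder v hv).deriv]
      rcases hv with ⟨hv0, hv1⟩
      have : (0:ℝ) < 1 - v^2 := by nlinarith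
      positivity
  have h0 : G 0 = 0 := by simp [hG]
  have := hmono (by simp : (0:ℝ) ∈ Ico (0:ℝ) 1) (by exact ⟨hu0.le, hu1⟩) hu0
  rw [h0] at this
  simp only [hG] at this
  linarith

lemma logUB {y : ℝ} (hy : 0 < y) :
    Real.log (y+2) - Real.log y <
      2/(y+1) + 2/(3*(y+1)^3) + 2/(5*(y+1)^5) + 2/(7*(y*(y+1)^5*(y+2))) := by
  have hy1 : (0:ℝ) < y + 1 := by linarith
  have hy2 : (0:ℝ) < y + 2 := by linarith
  set u : ℝ := 1/(y+1) with hu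
  have hu0 : 0 < u := by positivity
  have hu1 : u < 1 := by rw [hu, div_lt_one hy1]; linarith
  have h := artanh_ub hu0 hu1
  have e1 : (1:ℝ) + u = (y+2)/(y+1) := by rw [hu]; field_simp; ring
  have e2 : (1:ℝ) - u = y/(y+1) := by rw [hu]; field_simp; ring
  have hlog : Real.log (1+u) - Real.log (1-u) = Real.log (y+2) - Real.log y := by
    rw [e1, e2, Real.log_div hy2.ne' hy1.ne', Real.log_div hy.ne' hy1.ne']
    ring
  have hrat : 2*u + 2*u^3/3 + 2*u^5/5 + 2*u^7/(7*(1-u^2)) =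
      2/(y+1) + 2/(3*(y+1)^3) + 2/(5*(y+1)^5) + 2/(7*(y*(y+1)^5*(y+2))) := by
    rw [hu]
    rw [show (1:ℝ) - (1/(y+1))^2 = (y*(y+2))/((y+1)^2) by field_simp; ring]
    field_simp
  rw [hlog, hrat] at h
  exact h

lemma logLB {y : ℝ} (hy : 0 < y) :
    2/(y+1) + 2/(3*(y+1)^3) + 2/(5*(y+1)^5) + 2/(7*(y+1)^7) <
      Real.log (y+2) - Real.log y := by
  have hy1 : (0:ℝ) < y + 1 := by linarith
  have hy2 : (0:ℝ) < y + 2 := by linarith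
  set u : ℝ := 1/(y+1) with hu
  have hu0 : 0 < u := by positivity
  have hu1 : u < 1 := by rw [hu, div_lt_one hy1]; linarith
  have h := artanh_lb hu0 hu1
  have e1 : (1:ℝ) + u = (y+2)/(y+1) := by rw [hu]; field_simp; ring
  have e2 : (1:ℝ) - u = y/(y+1) := by rw [hu]; field_simp; ring
  have hlog : Real.log (1+u) - Real.log (1-u) = Real.log (y+2) - Real.log y := by
    rw [e1, e2, Real.log_div hy2.ne' hy1.ne', Real.log_div hy.ne' hy1.ne']
    ring
  have hrat : 2*u + 2*u^3/3 + 2*u^5/5 + 2*u^7/7 =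
      2/(y+1) + 2/(3*(y+1)^3) + 2/(5*(y+1)^5) + 2/(7*(y+1)^7) := by
    rw [hu]; field_simp
  rw [hlog, hrat] at h
  exact h

noncomputable def gP (t : ℝ) : ℝ := 2 * digamma (t+1) - Real.log t - Real.log (t+1) - Pf t
noncomputable def gQ (t : ℝ) : ℝ := 2 * digamma (t+1) - Real.log t - Real.log (t+1) - Qf t

lemma gP_step {y : ℝ} (hy : 0 < y) : gP y < gP (y+1) := by
  have h1 : digamma (y+1+1) = digamma (y+1) + 1/(y+1) := digamma_add_one (by linarith)
  have h2 := logUB hy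
  have h3 := keyP hy
  have h4 : 2/(y+1) = 2*(1/(y+1)) := by ring
  unfold gP
  rw [h1, show y+1+1 = y+2 by ring]
  linarith

lemma gQ_step {y : ℝ} (hy : 0 < y) : gQ (y+1) < gQ y := by
  have h1 : digamma (y+1+1) = digamma (y+1) + 1/(y+1) := digamma_add_one (by linarith)
  have h2 := logLB hy
  have h3 := keyQ hy
  have h4 : 2/(y+1) = 2*(1/(y+1)) := by ring
  unfold gQ
  rw [h1, show y+1+1 = y+2 by ring]
  linarith

lemma sandwich {t : ℝ} (ht : 0 < t) {R : ℝ → ℝ} :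
    -(1/t) - R t ≤ 2 * digamma (t+1) - Real.log t - Real.log (t+1) - R t ∧
    2 * digamma (t+1) - Real.log t - Real.log (t+1) - R t ≤ 1/t - R t := by
  have ht1 : (0:ℝ) < t + 1 := by linarith
  have hl : Real.log t ≤ digamma (t+1) := (digamma_bracket ht).1
  have hr : digamma (t+1) ≤ Real.log (t+1) := (digamma_bracket ht1).2
  have hlog1 : Real.log (t+1) - Real.log t ≤ 1/t := by
    have h := Real.log_le_sub_one_of_pos (show (0:ℝ) < (t+1)/t by positivity)
    rw [Real.log_div ht1.ne' ht.ne'] at h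
    have : (t+1)/t - 1 = 1/t := by field_simp; ring
    linarith
  constructor <;> linarith

lemma tendsto_aux {x : ℝ} (hx : 0 < x) {R : ℝ → ℝ}
    (hb : ∀ t : ℝ, 0 < t → -(1/t) - R t ≤ 2 * digamma (t+1) - Real.log t - Real.log (t+1) - R t ∧
      2 * digamma (t+1) - Real.log t - Real.log (t+1) - R t ≤ 1/t - R t)
    (hR : Tendsto (fun n : ℕ => R (x + n)) atTop (nhds 0)) :
    Tendsto (fun n : ℕ => 2 * digamma (x + n + 1) - Real.log (x + n) - Real.log (x + n + 1)
      - R (x + n)) atTop (nhds 0) := by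
  have hinf : Tendsto (fun n : ℕ => x + (n:ℝ)) atTop atTop :=
    tendsto_atTop_add_const_left _ x tendsto_natCast_atTop_atTop
  have hinv : Tendsto (fun n : ℕ => 1/(x + (n:ℝ))) atTop (nhds 0) := by
    simpa [one_div, Pi.inv_def] using hinf.inv_tendsto_atTop
  have hup : Tendsto (fun n : ℕ => 1/(x + (n:ℝ)) - R (x + n)) atTop (nhds 0) := by
    simpa using hinv.sub hR
  have hlo : Tendsto (fun n : ℕ => -(1/(x + (n:ℝ))) - R (x + n)) atTop (nhds 0) := by
    simpa using (hinv.neg).sub hR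
  refine tendsto_of_tendsto_of_tendsto_of_le_of_le hlo hup ?_ ?_
  · intro n
    exact (hb (x + n) (by positivity)).1
  · intro n
    exact (hb (x + n) (by positivity)).2

lemma tendsto_Pf {x : ℝ} (hx : 0 < x) : Tendsto (fun n : ℕ => Pf (x + n)) atTop (nhds 0) := by
  have hinf : Tendsto (fun n : ℕ => x + (n:ℝ)) atTop atTop :=
    tendsto_atTop_add_const_left _ x tendsto_natCast_atTop_atTop
  have hinv : Tendsto (fun n : ℕ => (x + (n:ℝ))⁻¹) atTop (nhds 0) := hinf.inv_tendsto_atTop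
  have hF : Continuous (fun s : ℝ => s^2/3 - s^3/3 + 4*s^4/15 - s^5/5 + 10*s^6/63) := by fun_prop
  have hcomp := (hF.tendsto 0).comp hinv
  have h0 : (fun s : ℝ => s^2/3 - s^3/3 + 4*s^4/15 - s^5/5 + 10*s^6/63) 0 = 0 := by norm_num
  norm_num at hcomp
  apply hcomp.congr
  intro n
  have ht : (0:ℝ) < x + n := by positivity
  simp only [Function.comp_apply, Pf]
  field_simp

lemma tendsto_Qf {x : ℝ} (hx : 0 < x) : Tendsto (fun n : ℕ => Qf (x + n)) atTop (nhds 0) := by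
  have hinf : Tendsto (fun n : ℕ => x + (n:ℝ)) atTop atTop :=
    tendsto_atTop_add_const_left _ x tendsto_natCast_atTop_atTop
  have hinv : Tendsto (fun n : ℕ => (x + (n:ℝ))⁻¹) atTop (nhds 0) := hinf.inv_tendsto_atTop
  have hF : Continuous (fun s : ℝ => s^2/3 - s^3/3 + 4*s^4/15 - s^5/5 + 10*s^6/63 - s^7/7) := by
    fun_prop
  have hcomp := (hF.tendsto 0).comp hinv
  have h0 : (fun s : ℝ => s^2/3 - s^3/3 + 4*s^4/15 - s^5/5 + 10*s^6/63 - s^7/7) 0 = 0 := by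
    norm_num
  norm_num at hcomp
  apply hcomp.congr
  intro n
  have ht : (0:ℝ) < x + n := by positivity
  simp only [Function.comp_apply, Qf, Pf]
  field_simp

lemma gP_nonpos {x : ℝ} (hx : 0 < x) : gP x ≤ 0 := by
  have hmono : ∀ n : ℕ, gP x ≤ gP (x + n) := by
    intro n
    induction n with
    | zero => simp
    | succ k ih =>
      have hk : (0:ℝ) < x + k := by positivity
      have := gP_step hk
      have he : x + (k:ℝ) + 1 = x + ((k:ℕ) + 1 : ℕ) := by push_cast; ring
      rw [he] at this
      exact ih.trans this.le
  have hten : Tendsto (fun n : ℕ => gP (x + n)) atTop (nhds 0) := by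
    have := tendsto_aux hx (R := Pf) (fun t ht => sandwich ht) (tendsto_Pf hx)
    apply this.congr
    intro n
    rfl
  exact ge_of_tendsto' hten hmono

lemma gQ_nonneg {x : ℝ} (hx : 0 < x) : 0 ≤ gQ x := by
  have hmono : ∀ n : ℕ, gQ (x + n) ≤ gQ x := by
    intro n
    induction n with
    | zero => simp
    | succ k ih =>
      have hk : (0:ℝ) < x + k := by positivity
      have := gQ_step hk
      have he : x + (k:ℝ) + 1 = x + ((k:ℕ) + 1 : ℕ) := by push_cast; ring
      rw [he] at this
      exact (this.le).trans ih
  have hten : Tendsto (fun n : ℕ => gQ (x + n)) atTop (nhds 0) := by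
    have := tendsto_aux hx (R := Qf) (fun t ht => sandwich ht) (tendsto_Qf hx)
    apply this.congr
    intro n
    rfl
  exact le_of_tendsto' hten hmono

theorem digamma_bounds (x : ℝ) (hx : 0 < x) :
    1 / (3 * x ^ 2) - 1 / (3 * x ^ 3) + 4 / (15 * x ^ 4) - 1 / (5 * x ^ 5) +
        10 / (63 * x ^ 6) - 1 / (7 * x ^ 7) <
      2 * digamma (x + 1) - Real.log (x * (x + 1)) ∧
    2 * digamma (x + 1) - Real.log (x * (x + 1)) <
      1 / (3 * x ^ 2) - 1 / (3 * x ^ 3) + 4 / (15 * x ^ 4) - 1 / (5 * x ^ 5) +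
        10 / (63 * x ^ 6) := by
  have hx1 : (0:ℝ) < x + 1 := by linarith
  have hlogmul : Real.log (x * (x + 1)) = Real.log x + Real.log (x + 1) :=
    Real.log_mul hx.ne' hx1.ne'
  have hQ : 0 < gQ x := lt_of_lt_of_le' (gQ_step hx) (gQ_nonneg hx1)
  have hP : gP x < 0 := lt_of_lt_of_le (gP_step hx) (gP_nonpos hx1)
  unfold gP Pf at hP
  unfold gQ Qf Pf at hQ
  constructor
  · rw [hlogmul]; linarith
  · rw [hlogmul]; linarith
end
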